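/- Let p(x) = ∏_{i=1}^n (x − λ_i) with n ≥ 2 and real roots λ_1 ≥ λ_2 ≥ … ≥ λ_n all lying in [0, 1/2]. Let k ≥ 1 be an integer, ε ∈ (0, 1/2], and set ε' = ε/(8·n^{1/k}), δ = ε'/(16·(2e)^k·k), δ' = δ^{k+1}, and α = δ'·ε'²/(2n²). Define g̃_1(y) = (p(y+α) − p(y))/(α·p(y)) and g̃_{k+1}(x) = ((−1)^k/(k!·δ^k)) · Σ_{i=0}^{k} (−1)^i · C(k,i) · g̃_1(x + (k−i)δ), and let g_{k+1}(x) = Σ_{i=1}^n 1/(x − λ_i)^{k+1}. Then for every x ∈ [λ_1 + ε', 1]: |g̃_{k+1}(x) − g_{k+1}(x)| ≤ (1/4)·g_{k+1}(x). -/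

import Mathlib

open Finset

/-- Weierstrass: `1 - ∑ b ≤ ∏ (1 - b)` for `0 ≤ b ≤ 1`. -/
lemma weier_aux {ι : Type*} (s : Finset ι) (b : ι → ℝ)
    (h0 : ∀ j ∈ s, 0 ≤ b j) (h1 : ∀ j ∈ s, b j ≤ 1) :
    1 - ∑ j ∈ s, b j ≤ ∏ j ∈ s, (1 - b j) := by
  induction s using Finset.cons_induction with
  | empty => simp
  | cons a s ha ih =>
    rw [Finset.prod_cons, Finset.sum_cons]
    have h0' := h0 a (Finset.mem_cons_self a s)
    have h1' := h1 a (Finset.mem_cons_self a s)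
    have ih' := ih (fun j hj => h0 j (Finset.mem_cons_of_mem hj))
      (fun j hj => h1 j (Finset.mem_cons_of_mem hj))
    have hs : 0 ≤ ∑ j ∈ s, b j :=
      Finset.sum_nonneg fun j hj => h0 j (Finset.mem_cons_of_mem hj)
    nlinarith [mul_le_mul_of_nonneg_left ih' (by linarith : (0:ℝ) ≤ 1 - b a)]

/-- Bernoulli: `1 + ∑ a ≤ ∏ (1 + a)` for `0 ≤ a`. -/
lemma bern_aux {ι : Type*} (s : Finset ι) (a : ι → ℝ) (h0 : ∀ j ∈ s, 0 ≤ a j) :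
    1 + ∑ j ∈ s, a j ≤ ∏ j ∈ s, (1 + a j) := by
  induction s using Finset.cons_induction with
  | empty => simp
  | cons c s hc ih =>
    rw [Finset.prod_cons, Finset.sum_cons]
    have h0' := h0 c (Finset.mem_cons_self c s)
    have ih' := ih (fun j hj => h0 j (Finset.mem_cons_of_mem hj))
    have hs : 0 ≤ ∑ j ∈ s, a j :=
      Finset.sum_nonneg fun j hj => h0 j (Finset.mem_cons_of_mem hj)
    nlinarith

/-- `∏ (1 + a) ≤ exp (∑ a)` for `0 ≤ a`. -/
lemma prod_le_exp_aux {ι : Type*} (s : Finset ι) (a : ι → ℝ) (h0 : ∀ j ∈ s, 0 ≤ a j) :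
    ∏ j ∈ s, (1 + a j) ≤ Real.exp (∑ j ∈ s, a j) := by
  rw [Real.exp_sum]
  refine Finset.prod_le_prod (fun j hj => by linarith [h0 j hj]) (fun j hj => ?_)
  linarith [Real.add_one_le_exp (a j)]

lemma diff_step_aux (k : ℕ) (f : ℕ → ℝ) :
    ∑ j ∈ range (k+2), (-1:ℝ)^j * ((k+1).choose j : ℝ) * f j
      = ∑ j ∈ range (k+1), (-1:ℝ)^j * (k.choose j : ℝ) * f j
        - ∑ j ∈ range (k+1), (-1:ℝ)^j * (k.choose j : ℝ) * f (j+1) := by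
  rw [Finset.sum_range_succ' (fun j => (-1:ℝ)^j * ((k+1).choose j : ℝ) * f j) (k+1),
      Finset.sum_range_succ' (fun j => (-1:ℝ)^j * (k.choose j : ℝ) * f j) k]
  have key : ∑ j ∈ range (k+1), (-1:ℝ)^(j+1) * (((k+1).choose (j+1)) : ℝ) * f (j+1)
      = ∑ j ∈ range (k+1), ((-1:ℝ)^(j+1) * ((k.choose (j+1)) : ℝ) * f (j+1)
          - (-1:ℝ)^j * ((k.choose j) : ℝ) * f (j+1)) := by
    refine Finset.sum_congr rfl fun j _ => ?_
    rw [Nat.choose_succ_succ]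
    push_cast
    ring
  have hz : ∑ j ∈ range (k+1), (-1:ℝ)^(j+1) * ((k.choose (j+1)) : ℝ) * f (j+1)
      = ∑ j ∈ range k, (-1:ℝ)^(j+1) * ((k.choose (j+1)) : ℝ) * f (j+1) := by
    rw [Finset.sum_range_succ, Nat.choose_succ_self]
    simp
  rw [key, Finset.sum_sub_distrib, hz]
  simp only [pow_zero, Nat.choose_zero_right, Nat.cast_one, one_mul]
  ring

lemma pf_identity_aux (δ : ℝ) (hδ : 0 ≤ δ) : ∀ (k : ℕ) (t : ℝ), 0 < t →
    ∑ j ∈ range (k+1), (-1:ℝ)^j * (k.choose j : ℝ) * (1/(t + (j:ℝ)*δ))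
      = (k.factorial : ℝ) * δ^k / ∏ j ∈ range (k+1), (t + (j:ℝ)*δ) := by
  intro k
  induction k with
  | zero => intro t ht; simp
  | succ k ih =>
    intro t ht
    have ht' : 0 < t + δ := by linarith
    have hstep := diff_step_aux k (fun j => 1/(t + (j:ℝ)*δ))
    have hsh : ∑ j ∈ range (k+1), (-1:ℝ)^j * (k.choose j : ℝ) * (1/(t + ((j+1:ℕ):ℝ)*δ))
        = ∑ j ∈ range (k+1), (-1:ℝ)^j * (k.choose j : ℝ) * (1/((t+δ) + (j:ℝ)*δ)) := by
      refine Finset.sum_congr rfl fun j _ => ?_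
      push_cast; ring_nf
    rw [show k + 1 + 1 = k + 2 from rfl, hstep, hsh, ih t ht, ih (t+δ) ht']
    have hP : (0:ℝ) < ∏ j ∈ range (k+1), (t + (j:ℝ)*δ) := by
      apply Finset.prod_pos; intro j _
      have : (0:ℝ) ≤ (j:ℝ)*δ := by positivity
      linarith
    have hQ : (0:ℝ) < ∏ j ∈ range (k+1), ((t+δ) + (j:ℝ)*δ) := by
      apply Finset.prod_pos; intro j _
      have : (0:ℝ) ≤ (j:ℝ)*δ := by positivity
      linarith
    have e2 : ∏ j ∈ range (k+2), (t + (j:ℝ)*δ)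
        = (∏ j ∈ range (k+1), ((t+δ) + (j:ℝ)*δ)) * t := by
      rw [Finset.prod_range_succ' (fun j => t + (j:ℝ)*δ) (k+1)]
      congr 1
      · refine Finset.prod_congr rfl fun j _ => ?_; push_cast; ring
      · simp
    have e1 : ∏ j ∈ range (k+2), (t + (j:ℝ)*δ)
        = (∏ j ∈ range (k+1), (t + (j:ℝ)*δ)) * (t + ((k+1:ℕ):ℝ)*δ) := by
      rw [Finset.prod_range_succ]
    have e3 : (∏ j ∈ range (k+1), ((t+δ) + (j:ℝ)*δ)) * t
        = (∏ j ∈ range (k+1), (t + (j:ℝ)*δ)) * (t + ((k+1:ℕ):ℝ)*δ) := by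
      rw [← e2, e1]
    set P := ∏ j ∈ range (k+1), (t + (j:ℝ)*δ)
    set Q := ∏ j ∈ range (k+1), ((t+δ) + (j:ℝ)*δ)
    rw [show k + 1 + 1 = k + 2 from rfl, e2]
    rw [Nat.factorial_succ]
    push_cast at e3 ⊢
    field_simp
    linear_combination δ^k * e3

lemma pf2_aux (δ : ℝ) (hδ : 0 < δ) (k : ℕ) (t : ℝ) (ht : 0 < t) :
    ((-1:ℝ)^k / ((k.factorial:ℝ) * δ^k)) *
      ∑ i ∈ range (k+1), (-1:ℝ)^i * (k.choose i : ℝ) * (1/(t + ((k-i:ℕ):ℝ)*δ))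
    = 1 / ∏ j ∈ range (k+1), (t + (j:ℝ)*δ) := by
  have hrefl := Finset.sum_range_reflect
    (fun i => (-1:ℝ)^i * (k.choose i : ℝ) * (1/(t + ((k-i:ℕ):ℝ)*δ))) (k+1)
  have hsum : ∑ i ∈ range (k+1), (-1:ℝ)^i * (k.choose i : ℝ) * (1/(t + ((k-i:ℕ):ℝ)*δ))
      = (-1:ℝ)^k * ∑ j ∈ range (k+1), (-1:ℝ)^j * (k.choose j : ℝ) * (1/(t + (j:ℝ)*δ)) := by
    rw [← hrefl, Finset.mul_sum]
    refine Finset.sum_congr rfl fun j hj => ?_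
    have hjk : j ≤ k := Nat.lt_succ_iff.mp (Finset.mem_range.mp hj)
    have h1 : k + 1 - 1 - j = k - j := by omega
    have h2 : k - (k - j) = j := by omega
    have h3 : k.choose (k - j) = k.choose j := Nat.choose_symm hjk
    have h4 : (-1:ℝ)^(k-j) = (-1:ℝ)^k * (-1:ℝ)^j := by
      have h5 : (-1:ℝ)^k = (-1:ℝ)^(k-j) * (-1:ℝ)^j := by
        rw [← pow_add, Nat.sub_add_cancel hjk]
      have h6 : ((-1:ℝ)^j) * ((-1:ℝ)^j) = 1 := by
        rw [← pow_add, ← two_mul, pow_mul]; norm_num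
      rw [h5, mul_assoc, h6, mul_one]
    rw [h1, h2, h3, h4]
    ring
  have hP : (0:ℝ) < ∏ j ∈ range (k+1), (t + (j:ℝ)*δ) := by
    apply Finset.prod_pos; intro j _
    have : (0:ℝ) ≤ (j:ℝ)*δ := by positivity
    linarith
  have hkf : (0:ℝ) < (k.factorial:ℝ) * δ^k := by positivity
  have hkk : ((-1:ℝ)^k) * ((-1:ℝ)^k) = 1 := by
    rw [← pow_add, ← two_mul, pow_mul]; norm_num
  rw [hsum, pf_identity_aux δ hδ.le k t ht]
  field_simp [hP.ne', hkf.ne']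
  linear_combination (∏ x ∈ range (k + 1), (t + δ * (x:ℝ))) * hkk
    + (Finset.prod_congr rfl fun j _ => by ring : ∏ x ∈ range (k + 1), (t + δ * (x:ℝ)) = ∏ x ∈ range (k + 1), (t + (x:ℝ) * δ))

set_option maxHeartbeats 1000000 in
/-- Main Technical Lemma: the finite-difference approximation `g̃_{k+1}`
built from the forward-difference approximation `g̃₁` of `p'/p` satisfies
`|g̃_{k+1}(x) − g_{k+1}(x)| ≤ (1/4) g_{k+1}(x)` on `[λ₁ + ε', 1]`. -/
theorem main_technical_lemma
    (n : ℕ) (hn : 2 ≤ n) (lam : Fin n → ℝ) (hlam : Antitone lam)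
    (hroots : ∀ i, lam i ∈ Set.Icc (0 : ℝ) (1 / 2))
    (p : ℝ → ℝ) (hp : ∀ y : ℝ, p y = ∏ i, (y - lam i))
    (k : ℕ) (hk : 1 ≤ k) (ε : ℝ) (hε : ε ∈ Set.Ioc (0 : ℝ) (1 / 2))
    (ε' δ δ' α : ℝ)
    (hε' : ε' = ε / (8 * (n : ℝ) ^ ((1 : ℝ) / k)))
    (hδ : δ = ε' / (16 * (2 * Real.exp 1) ^ k * k))
    (hδ' : δ' = δ ^ (k + 1))
    (hα : α = δ' * ε' ^ 2 / (2 * (n : ℝ) ^ 2))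
    (g1t : ℝ → ℝ) (hg1t : ∀ y : ℝ, g1t y = (p (y + α) - p y) / (α * p y))
    (gt : ℝ → ℝ)
    (hgt : ∀ y : ℝ, gt y = ((-1 : ℝ) ^ k / ((k.factorial : ℝ) * δ ^ k)) *
        ∑ i ∈ Finset.range (k + 1),
          (-1 : ℝ) ^ i * (k.choose i : ℝ) * g1t (y + ((k - i : ℕ) : ℝ) * δ))
    (x : ℝ) (hx : x ∈ Set.Icc (lam ⟨0, by omega⟩ + ε') 1) :
    |gt x - ∑ i, 1 / (x - lam i) ^ (k + 1)| ≤
      (1 / 4) * ∑ i, 1 / (x - lam i) ^ (k + 1) := by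
  obtain ⟨hε0, hε2⟩ := hε
  obtain ⟨hx1, hx2⟩ := hx
  -- basic numerics
  have hkR : (1:ℝ) ≤ (k:ℝ) := by exact_mod_cast hk
  have hkpos : (0:ℝ) < (k:ℝ) := by linarith
  have hnR : (2:ℝ) ≤ (n:ℝ) := by exact_mod_cast hn
  have hnpos : (0:ℝ) < (n:ℝ) := by linarith
  have he1 : (1:ℝ) ≤ Real.exp 1 := by nlinarith [Real.add_one_le_exp 1]
  have h2e : (2:ℝ)^k ≤ (2*Real.exp 1)^k := by
    apply pow_le_pow_left₀ (by norm_num) (by linarith)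
  have h2epos : (0:ℝ) < (2*Real.exp 1)^k := by positivity
  have h2kpos : (0:ℝ) < (2:ℝ)^k := by positivity
  have h2k1 : (1:ℝ) ≤ (2:ℝ)^k := by
    have : (1:ℕ) ≤ 2^k := Nat.one_le_two_pow
    exact_mod_cast this
  have hrpow : (1:ℝ) ≤ (n:ℝ)^((1:ℝ)/k) := Real.one_le_rpow (by linarith) (by positivity)
  have hε'pos : 0 < ε' := by rw [hε']; positivity
  have hε'16 : ε' ≤ 1/16 := by
    rw [hε']
    calc ε / (8 * (n:ℝ)^((1:ℝ)/k)) ≤ ε / 8 := by gcongr; linarith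
    _ ≤ 1/16 := by linarith
  have hδpos : 0 < δ := by rw [hδ]; positivity
  have h2kδ : (2:ℝ)^k * δ ≤ ε'/16 := by
    have hd1 : δ ≤ ε'/(16*(2:ℝ)^k) := by
      rw [hδ]
      apply div_le_div_of_nonneg_left hε'pos.le (by positivity)
      nlinarith
    calc (2:ℝ)^k * δ ≤ (2:ℝ)^k * (ε'/(16*(2:ℝ)^k)) := by gcongr
    _ = ε'/16 := by field_simp
  have hδ1 : δ ≤ 1 := by nlinarith
  have hδgauss : δ * ((k:ℝ)*((k:ℝ)+1)/2) ≤ ε'/32 := by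
    have hk2 : ((k:ℝ)+1) ≤ (2:ℝ)^k := by
      have := Nat.lt_two_pow_self (n := k)
      have : (k:ℝ) + 1 ≤ ((2^k : ℕ) : ℝ) := by exact_mod_cast this
      simpa using this
    have heq : δ * ((k:ℝ)*((k:ℝ)+1)/2) = ε' * ((k:ℝ)+1) / (32 * (2*Real.exp 1)^k) := by
      rw [hδ]; field_simp; ring
    rw [heq]
    calc ε' * ((k:ℝ)+1) / (32 * (2*Real.exp 1)^k)
        ≤ ε' * (2*Real.exp 1)^k / (32 * (2*Real.exp 1)^k) := by gcongr; linarith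
    _ = ε'/32 := by field_simp
  have hδ'pos : 0 < δ' := by rw [hδ']; positivity
  have hαpos : 0 < α := by rw [hα]; positivity
  have hδk1le : δ^(k+1) ≤ 1 := pow_le_one₀ hδpos.le hδ1
  -- root gap bounds
  have hlam0 : ∀ i : Fin n, lam i ≤ lam ⟨0, by omega⟩ := by
    intro i
    apply hlam
    simp [Fin.le_def]
  have ht_lb : ∀ i : Fin n, ε' ≤ x - lam i := by
    intro i
    have := hlam0 i
    linarith
  have ht_pos : ∀ i : Fin n, 0 < x - lam i := fun i => lt_of_lt_of_le hε'pos (ht_lb i)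
  have ht_ub : ∀ i : Fin n, x - lam i ≤ 1 := by
    intro i
    have := (hroots i).1
    linarith
  set E : ℝ := (3:ℝ)/8 * δ^(k+1) with hE
  -- Step 1: the forward-difference estimate of g₁ at shifted points
  have key1 : ∀ c : ℝ, 0 ≤ c →
      |g1t (x + c) - ∑ i, 1/(x - lam i + c)| ≤ E := by
    intro c hc
    have hu_lb : ∀ i : Fin n, ε' ≤ x + c - lam i := by
      intro i; have := ht_lb i; linarith
    have hu_pos : ∀ i : Fin n, 0 < x + c - lam i :=
      fun i => lt_of_lt_of_le hε'pos (hu_lb i)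
    have hPpos : (0:ℝ) < ∏ i, (x + c - lam i) := Finset.prod_pos fun i _ => hu_pos i
    have hann : ∀ i : Fin n, 0 ≤ α/(x + c - lam i) :=
      fun i => div_nonneg hαpos.le (hu_pos i).le
    set S : ℝ := ∑ i, α/(x + c - lam i) with hSdef
    set Q : ℝ := ∏ i, (1 + α/(x + c - lam i)) with hQdef
    have hSnn : 0 ≤ S := Finset.sum_nonneg fun i _ => hann i
    have hQ1 : 1 + S ≤ Q := bern_aux _ _ (fun i _ => hann i)
    have hQ2 : Q ≤ Real.exp S := prod_le_exp_aux _ _ (fun i _ => hann i)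
    have hsplit : ∏ i, (x + c + α - lam i) = (∏ i, (x + c - lam i)) * Q := by
      rw [hQdef, ← Finset.prod_mul_distrib]
      refine Finset.prod_congr rfl fun i _ => ?_
      have h0 : x + c - lam i ≠ 0 := (hu_pos i).ne'
      field_simp
      ring
    have hA : ∑ i, 1/(x - lam i + c) = S/α := by
      rw [hSdef, Finset.sum_div]
      refine Finset.sum_congr rfl fun i _ => ?_
      rw [show x - lam i + c = x + c - lam i from by ring]
      have h0 : x + c - lam i ≠ 0 := (hu_pos i).ne'
      field_simp
    have hval : g1t (x + c) - ∑ i, 1/(x - lam i + c) = (Q - 1 - S)/α := by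
      rw [hA, hg1t, hp (x + c + α), hp (x + c), hsplit]
      field_simp
    rw [hval]
    have hS_ub : S ≤ (n:ℝ) * α / ε' := by
      rw [hSdef]
      calc ∑ i, α/(x + c - lam i) ≤ ∑ _i : Fin n, α/ε' := by
            apply Finset.sum_le_sum
            intro i _
            exact div_le_div_of_nonneg_left hαpos.le hε'pos (hu_lb i)
      _ = (n:ℝ) * (α/ε') := by
            rw [Finset.sum_const, Finset.card_univ, Fintype.card_fin, nsmul_eq_mul]
      _ = (n:ℝ) * α / ε' := by ring
    have hnae : (n:ℝ) * α / ε' = δ^(k+1) * ε' / (2*(n:ℝ)) := by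
      rw [hα, hδ']
      field_simp
    have hS1 : S ≤ 1 := by
      rw [hnae] at hS_ub
      have hle1 : δ^(k+1) * ε' / (2*(n:ℝ)) ≤ 1 := by
        rw [div_le_one (by positivity)]
        nlinarith [hδk1le, hε'16]
      linarith
    have habs : |S| ≤ 1 := by rw [abs_of_nonneg hSnn]; exact hS1
    have hexp := Real.exp_bound habs (by norm_num : 0 < 2)
    have hs2 : ∑ i ∈ range 2, S^i/(i.factorial:ℝ) = 1 + S := by
      norm_num [Finset.sum_range_succ]
    rw [hs2, abs_of_nonneg hSnn] at hexp
    have hexp2 : Real.exp S ≤ 1 + S + (3/4)*S^2 := by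
      have h := (abs_le.mp hexp).2
      norm_num [Nat.factorial] at h
      linarith [h]
    have hQub : Q - 1 - S ≤ (3/4)*S^2 := by linarith
    have hQlb : 0 ≤ Q - 1 - S := by linarith
    rw [abs_of_nonneg (div_nonneg hQlb hαpos.le)]
    have hSsq : S^2 ≤ ((n:ℝ)*α/ε')^2 := pow_le_pow_left₀ hSnn hS_ub 2
    have hfin : (3/4)*(((n:ℝ)*α/ε')^2)/α = E := by
      rw [hE, hα, hδ']
      field_simp
      ring
    calc (Q - 1 - S)/α ≤ ((3/4)*S^2)/α := by gcongr
    _ ≤ ((3/4)*(((n:ℝ)*α/ε')^2))/α := by gcongr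
    _ = E := hfin

  set ES : ℝ := ∑ i, 1/(∏ j ∈ range (k+1), (x - lam i + (j:ℝ)*δ)) with hESdef
  -- Step 2
  have key2 : |gt x - ES| ≤ 1/8 := by
    have hkfpos : (0:ℝ) < (k.factorial:ℝ) := by
      exact_mod_cast k.factorial_pos
    have hkf1 : (1:ℝ) ≤ (k.factorial:ℝ) := by
      exact_mod_cast Nat.one_le_iff_ne_zero.mpr k.factorial_ne_zero
    have hδkpos : (0:ℝ) < δ^k := by positivity
    have hES2 : ES = ((-1:ℝ)^k/((k.factorial:ℝ)*δ^k)) *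
        ∑ m ∈ range (k+1), (-1:ℝ)^m * (k.choose m : ℝ) *
          (∑ i, 1/(x - lam i + ((k-m:ℕ):ℝ)*δ)) := by
      rw [hESdef]
      calc ∑ i, 1/(∏ j ∈ range (k+1), (x - lam i + (j:ℝ)*δ))
          = ∑ i, ((-1:ℝ)^k/((k.factorial:ℝ)*δ^k) *
              ∑ m ∈ range (k+1), (-1:ℝ)^m * (k.choose m : ℝ)
                * (1/((x - lam i) + ((k-m:ℕ):ℝ)*δ))) := by
            refine Finset.sum_congr rfl fun i _ => ?_
            rw [pf2_aux δ hδpos k (x - lam i) (ht_pos i)]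
      _ = ((-1:ℝ)^k/((k.factorial:ℝ)*δ^k)) *
            ∑ i, ∑ m ∈ range (k+1), (-1:ℝ)^m * (k.choose m : ℝ)
              * (1/((x - lam i) + ((k-m:ℕ):ℝ)*δ)) := by
            rw [Finset.mul_sum]
      _ = ((-1:ℝ)^k/((k.factorial:ℝ)*δ^k)) *
            ∑ m ∈ range (k+1), (-1:ℝ)^m * (k.choose m : ℝ) *
              (∑ i, 1/(x - lam i + ((k-m:ℕ):ℝ)*δ)) := by
            congr 1
            rw [Finset.sum_comm]
            refine Finset.sum_congr rfl fun m _ => ?_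
            rw [Finset.mul_sum]
    have hgtES : gt x - ES = ((-1:ℝ)^k/((k.factorial:ℝ)*δ^k)) *
        ∑ m ∈ range (k+1), (-1:ℝ)^m * (k.choose m : ℝ) *
          (g1t (x + ((k-m:ℕ):ℝ)*δ) - ∑ i, 1/(x - lam i + ((k-m:ℕ):ℝ)*δ)) := by
      rw [hgt, hES2, ← mul_sub, ← Finset.sum_sub_distrib]
      congr 1
      refine Finset.sum_congr rfl fun m _ => ?_
      ring
    have hcoef : |(-1:ℝ)^k/((k.factorial:ℝ)*δ^k)| = 1/((k.factorial:ℝ)*δ^k) := by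
      rw [abs_div, abs_pow, abs_neg, abs_one, one_pow,
        abs_of_pos (by positivity : (0:ℝ) < (k.factorial:ℝ)*δ^k)]
    have hD : |∑ m ∈ range (k+1), (-1:ℝ)^m * (k.choose m : ℝ) *
        (g1t (x + ((k-m:ℕ):ℝ)*δ) - ∑ i, 1/(x - lam i + ((k-m:ℕ):ℝ)*δ))| ≤ 2^k * E := by
      calc |∑ m ∈ range (k+1), (-1:ℝ)^m * (k.choose m : ℝ) *
            (g1t (x + ((k-m:ℕ):ℝ)*δ) - ∑ i, 1/(x - lam i + ((k-m:ℕ):ℝ)*δ))|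
          ≤ ∑ m ∈ range (k+1), |(-1:ℝ)^m * (k.choose m : ℝ) *
            (g1t (x + ((k-m:ℕ):ℝ)*δ) - ∑ i, 1/(x - lam i + ((k-m:ℕ):ℝ)*δ))| :=
            Finset.abs_sum_le_sum_abs _ _
      _ ≤ ∑ m ∈ range (k+1), (k.choose m : ℝ) * E := by
            apply Finset.sum_le_sum
            intro m _
            rw [abs_mul, abs_mul, abs_pow, abs_neg, abs_one, one_pow, one_mul,
              abs_of_nonneg (Nat.cast_nonneg _)]
            exact mul_le_mul_of_nonneg_left
              (key1 _ (mul_nonneg (Nat.cast_nonneg _) hδpos.le)) (Nat.cast_nonneg _)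
      _ = 2^k * E := by
            rw [← Finset.sum_mul]
            congr 1
            rw [← Nat.cast_sum, Nat.sum_range_choose]
            push_cast
            ring
    rw [hgtES, abs_mul, hcoef]
    calc (1/((k.factorial:ℝ)*δ^k)) * |∑ m ∈ range (k+1), (-1:ℝ)^m * (k.choose m : ℝ) *
          (g1t (x + ((k-m:ℕ):ℝ)*δ) - ∑ i, 1/(x - lam i + ((k-m:ℕ):ℝ)*δ))|
        ≤ (1/((k.factorial:ℝ)*δ^k)) * (2^k * E) := by
          apply mul_le_mul_of_nonneg_left hD (by positivity)
    _ = (3/8) * (2^k*δ) / (k.factorial:ℝ) := by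
          rw [hE, pow_succ]
          field_simp
    _ ≤ (3/8) * (2^k*δ) / 1 := by
          apply div_le_div_of_nonneg_left _ (by norm_num) hkf1
          positivity
    _ ≤ 1/8 := by
          rw [div_one]
          nlinarith [h2kδ, hε'16]

  -- Step 3: per-root comparison of the exact product with the pure power
  have key3 : ∀ i : Fin n,
      1/(∏ j ∈ range (k+1), (x - lam i + (j:ℝ)*δ)) ≤ 1/(x - lam i)^(k+1)
      ∧ 1/(x - lam i)^(k+1) - 1/(∏ j ∈ range (k+1), (x - lam i + (j:ℝ)*δ))
          ≤ (1/8)*(1/(x - lam i)^(k+1)) := by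
    intro i
    set u : ℝ := x - lam i with hu_def
    have hu_lb : ε' ≤ u := ht_lb i
    have hu_ub : u ≤ 1 := ht_ub i
    have hup : 0 < u := ht_pos i
    have hfac_pos : ∀ j : ℕ, (0:ℝ) < u + (j:ℝ)*δ := by
      intro j
      have : (0:ℝ) ≤ (j:ℝ)*δ := mul_nonneg (Nat.cast_nonneg _) hδpos.le
      linarith
    have hPpos : (0:ℝ) < ∏ j ∈ range (k+1), (u + (j:ℝ)*δ) :=
      Finset.prod_pos fun j _ => hfac_pos j
    have hupow : (0:ℝ) < u^(k+1) := by positivity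
    have hPge : u^(k+1) ≤ ∏ j ∈ range (k+1), (u + (j:ℝ)*δ) := by
      calc u^(k+1) = ∏ _j ∈ range (k+1), u := by
            rw [Finset.prod_const, Finset.card_range]
      _ ≤ ∏ j ∈ range (k+1), (u + (j:ℝ)*δ) := by
            apply Finset.prod_le_prod (fun j _ => hup.le)
            intro j _
            have : (0:ℝ) ≤ (j:ℝ)*δ := mul_nonneg (Nat.cast_nonneg _) hδpos.le
            linarith
    constructor
    · exact one_div_le_one_div_of_le hupow hPge
    · -- Weierstrass bound
      have hb0 : ∀ j ∈ range (k+1), (0:ℝ) ≤ (j:ℝ)*δ/(u + (j:ℝ)*δ) := by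
        intro j _
        exact div_nonneg (mul_nonneg (Nat.cast_nonneg _) hδpos.le) (hfac_pos j).le
      have hb1 : ∀ j ∈ range (k+1), (j:ℝ)*δ/(u + (j:ℝ)*δ) ≤ 1 := by
        intro j _
        rw [div_le_one (hfac_pos j)]
        linarith
      have hW : 1 - ∑ j ∈ range (k+1), (j:ℝ)*δ/(u + (j:ℝ)*δ)
          ≤ ∏ j ∈ range (k+1), (1 - (j:ℝ)*δ/(u + (j:ℝ)*δ)) :=
        weier_aux (range (k+1)) (fun j => (j:ℝ)*δ/(u + (j:ℝ)*δ)) hb0 hb1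
      have hprod_eq : ∏ j ∈ range (k+1), (1 - (j:ℝ)*δ/(u + (j:ℝ)*δ))
          = u^(k+1) / ∏ j ∈ range (k+1), (u + (j:ℝ)*δ) := by
        have hcongr : ∀ j ∈ range (k+1),
            (1 - (j:ℝ)*δ/(u + (j:ℝ)*δ)) = u/(u + (j:ℝ)*δ) := by
          intro j _
          field_simp
          ring
        rw [Finset.prod_congr rfl hcongr, Finset.prod_div_distrib,
            Finset.prod_const, Finset.card_range]
      have hgauss : (∑ j ∈ range (k+1), (j:ℝ)) = (k:ℝ)*((k:ℝ)+1)/2 := by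
        have h := congrArg (Nat.cast : ℕ → ℝ) (Finset.sum_range_id_mul_two (k+1))
        push_cast at h
        linarith
      have hsumb : ∑ j ∈ range (k+1), (j:ℝ)*δ/(u + (j:ℝ)*δ) ≤ 1/32 := by
        calc ∑ j ∈ range (k+1), (j:ℝ)*δ/(u + (j:ℝ)*δ)
            ≤ ∑ j ∈ range (k+1), (j:ℝ)*δ/ε' := by
              apply Finset.sum_le_sum
              intro j _
              apply div_le_div_of_nonneg_left (mul_nonneg (Nat.cast_nonneg _) hδpos.le)
                hε'pos
              have : (0:ℝ) ≤ (j:ℝ)*δ := mul_nonneg (Nat.cast_nonneg _) hδpos.le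
              linarith [hu_lb]
        _ = (δ * ((k:ℝ)*((k:ℝ)+1)/2))/ε' := by
              rw [← Finset.sum_div, ← Finset.sum_mul, hgauss]; ring
        _ ≤ (ε'/32)/ε' := by gcongr
        _ = 1/32 := by field_simp
      have h78 : (7:ℝ)/8 ≤ u^(k+1) / ∏ j ∈ range (k+1), (u + (j:ℝ)*δ) := by
        rw [← hprod_eq]
        calc (7:ℝ)/8 ≤ 1 - 1/32 := by norm_num
        _ ≤ 1 - ∑ j ∈ range (k+1), (j:ℝ)*δ/(u + (j:ℝ)*δ) := by linarith
        _ ≤ _ := hW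
      have h78' : (7/8) * (∏ j ∈ range (k+1), (u + (j:ℝ)*δ)) ≤ u^(k+1) :=
        (le_div_iff₀ hPpos).mp h78
      have hfrac : (7/8)/u^(k+1) ≤ 1/(∏ j ∈ range (k+1), (u + (j:ℝ)*δ)) := by
        rw [div_le_div_iff₀ hupow hPpos]
        linarith [h78']
      have hring : 1/u^(k+1) - (7/8)/u^(k+1) = (1/8)*(1/u^(k+1)) := by ring
      linarith [hfrac, hring]

  have hg1 : 1 ≤ ∑ i, 1/(x - lam i)^(k+1) := by
    have h0 : ∀ i : Fin n, (0:ℝ) ≤ 1/(x - lam i)^(k+1) := fun i => by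
      have := ht_pos i; positivity
    have hterm : 1 ≤ 1/(x - lam ⟨0, by omega⟩)^(k+1) := by
      have h2 : (x - lam ⟨0, by omega⟩)^(k+1) ≤ 1 :=
        pow_le_one₀ (ht_pos _).le (ht_ub _)
      have h3 : (0:ℝ) < (x - lam ⟨0, by omega⟩)^(k+1) := by
        have := ht_pos (⟨0, by omega⟩ : Fin n); positivity
      rw [le_div_iff₀ h3]; linarith
    calc (1:ℝ) ≤ 1/(x - lam ⟨0, by omega⟩)^(k+1) := hterm
    _ ≤ ∑ i, 1/(x - lam i)^(k+1) :=
        Finset.single_le_sum (fun i _ => h0 i) (Finset.mem_univ _)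
  have hESle : ES ≤ ∑ i, 1/(x - lam i)^(k+1) := by
    rw [hESdef]
    exact Finset.sum_le_sum fun i _ => (key3 i).1
  have hESge : (∑ i, 1/(x - lam i)^(k+1)) - ES ≤ (1/8) * ∑ i, 1/(x - lam i)^(k+1) := by
    rw [hESdef, ← Finset.sum_sub_distrib, Finset.mul_sum]
    exact Finset.sum_le_sum fun i _ => (key3 i).2
  have habs2 : |ES - ∑ i, 1/(x - lam i)^(k+1)| ≤ (1/8) * ∑ i, 1/(x - lam i)^(k+1) := by
    rw [abs_sub_comm, abs_of_nonneg (by linarith)]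
    exact hESge
  calc |gt x - ∑ i, 1/(x - lam i)^(k+1)|
      = |(gt x - ES) + (ES - ∑ i, 1/(x - lam i)^(k+1))| := by congr 1; ring
  _ ≤ |gt x - ES| + |ES - ∑ i, 1/(x - lam i)^(k+1)| := abs_add_le _ _
  _ ≤ 1/8 + (1/8) * ∑ i, 1/(x - lam i)^(k+1) := add_le_add key2 habs2
  _ ≤ (1/8) * ∑ i, 1/(x - lam i)^(k+1) + (1/8) * ∑ i, 1/(x - lam i)^(k+1) := by linarith
  _ = (1/4) * ∑ i, 1/(x - lam i)^(k+1) := by ring
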